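/- Fix q ∈ ℂ with q ≠ 0 and q not a root of unity. Let (e₋₁, e₁, A) be a Podleś representation with parameter c = 0 on a finite-dimensional complex vector space V. Then there exist subspaces V₊, V₀₀, V₋ of V, each invariant under e₋₁, e₁ and A, with V = V₊ ⊕ V₀₀ ⊕ V₋, such that: the restriction of e₁ to V₊ is bijective and the restriction of e₋₁ to V₊ is nilpotent; the restrictions of both e₁ and e₋₁ to V₀₀ are nilpotent; the restriction of e₋₁ to V₋ is bijective and the restriction of e₁ to V₋ is nilpotent. -/

import Mathlib

/-- A Podleś representation with parameter `c` on a complex vector space. -/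
def PodlesRep (q c : ℂ) {V : Type*} [AddCommGroup V] [Module ℂ V]
    (em e1 A : Module.End ℂ V) : Prop :=
  em * e1 = A - A ^ 2 + c • (1 : Module.End ℂ V) ∧
  e1 * em = q ^ 2 • A - q ^ 4 • A ^ 2 + c • (1 : Module.End ℂ V) ∧
  e1 * A = q ^ 2 • (A * e1) ∧
  em * A = (q ^ 2)⁻¹ • (A * em)

open Module LinearMap

section Aux

variable {V : Type*} [AddCommGroup V] [Module ℂ V] [FiniteDimensional ℂ V]

lemma podles_pow_comm (q : ℂ) (e1 A : Module.End ℂ V)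
    (h3 : e1 * A = q ^ 2 • (A * e1)) (k : ℕ) :
    e1 ^ k * A = (q ^ 2) ^ k • (A * e1 ^ k) := by
  induction k with
  | zero => simp
  | succ k ih =>
    rw [pow_succ', mul_assoc, ih, mul_smul_comm, ← mul_assoc, h3, smul_mul_assoc, smul_smul,
      mul_assoc, ← pow_succ', ← pow_succ]

/-- One-sided structure for a Podleś representation: properties of the stable range and
stable kernel of `e1`. -/
lemma podles_side (q : ℂ) (hq : q ≠ 0) (em e1 A : Module.End ℂ V)
    (h1 : em * e1 = A - A ^ 2)
    (h2 : e1 * em = q ^ 2 • A - q ^ 4 • A ^ 2)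
    (h3 : e1 * A = q ^ 2 • (A * e1)) :
    (∀ x ∈ range (e1 ^ finrank ℂ V), e1 x ∈ range (e1 ^ finrank ℂ V)) ∧
    (∀ x ∈ range (e1 ^ finrank ℂ V), A x ∈ range (e1 ^ finrank ℂ V)) ∧
    (∀ x ∈ range (e1 ^ finrank ℂ V), em x ∈ range (e1 ^ finrank ℂ V)) ∧
    (∀ x ∈ ker (e1 ^ finrank ℂ V), e1 x ∈ ker (e1 ^ finrank ℂ V)) ∧
    (∀ x ∈ ker (e1 ^ finrank ℂ V), A x ∈ ker (e1 ^ finrank ℂ V)) ∧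
    (∀ x ∈ ker (e1 ^ finrank ℂ V), em x ∈ ker (e1 ^ finrank ℂ V)) ∧
    (∀ x ∈ range (e1 ^ finrank ℂ V), e1 x = 0 → x = 0) ∧
    (∀ y ∈ range (e1 ^ finrank ℂ V), ∃ x ∈ range (e1 ^ finrank ℂ V), e1 x = y) ∧
    Disjoint (range (e1 ^ finrank ℂ V)) (ker (e1 ^ finrank ℂ V)) ∧
    range (e1 ^ finrank ℂ V) ⊔ ker (e1 ^ finrank ℂ V) = ⊤ := by
  set d := finrank ℂ V with hd
  have hq2 : (q ^ 2) ^ d ≠ 0 := pow_ne_zero _ (pow_ne_zero _ hq)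
  have hker : ∀ m, d ≤ m → ker (e1 ^ m) = ker (e1 ^ d) := fun m hm =>
    Module.End.ker_pow_eq_ker_pow_finrank_of_le hm
  have hrange : range (e1 ^ (d + 1)) = range (e1 ^ d) := by
    have hle : range (e1 ^ (d + 1)) ≤ range (e1 ^ d) := by
      rw [pow_succ, Module.End.mul_eq_comp]
      exact range_comp_le_range _ _
    have h1r := finrank_range_add_finrank_ker (e1 ^ (d + 1))
    have h2r := finrank_range_add_finrank_ker (e1 ^ d)
    rw [hker (d + 1) (Nat.le_succ d)] at h1r
    exact Submodule.eq_of_le_of_finrank_le hle (by omega)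
  -- quasi-commutation, applied
  have hcomm : ∀ x : V, (e1 ^ d) (A x) = (q ^ 2) ^ d • A ((e1 ^ d) x) := by
    intro x
    have := congrArg (fun f : Module.End ℂ V => f x) (podles_pow_comm q e1 A h3 d)
    simpa using this
  -- A-invariance of range
  have hPA : ∀ x ∈ range (e1 ^ d), A x ∈ range (e1 ^ d) := by
    rintro x ⟨y, rfl⟩
    have : A ((e1 ^ d) y) = ((q ^ 2) ^ d)⁻¹ • (e1 ^ d) (A y) := by
      rw [hcomm, inv_smul_smul₀ hq2]
    rw [this]
    exact Submodule.smul_mem _ _ ⟨A y, rfl⟩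
  have hPe1 : ∀ x ∈ range (e1 ^ d), e1 x ∈ range (e1 ^ d) := by
    rintro x ⟨y, rfl⟩
    rw [← hrange]
    exact ⟨y, by rw [pow_succ', Module.End.mul_apply]⟩
  have hPem : ∀ x ∈ range (e1 ^ d), em x ∈ range (e1 ^ d) := by
    intro x hx
    rw [← hrange] at hx
    obtain ⟨y, rfl⟩ := hx
    have hz : (e1 ^ d) y ∈ range (e1 ^ d) := ⟨y, rfl⟩
    have : em ((e1 ^ (d + 1)) y) = A ((e1 ^ d) y) - A (A ((e1 ^ d) y)) := by
      rw [pow_succ', Module.End.mul_apply, ← Module.End.mul_apply em e1, h1]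
      simp [pow_two, Module.End.mul_apply]
    rw [this]
    exact sub_mem (hPA _ hz) (hPA _ (hPA _ hz))
  have hKe1 : ∀ x ∈ ker (e1 ^ d), e1 x ∈ ker (e1 ^ d) := by
    intro x hx
    rw [mem_ker] at hx ⊢
    rw [← Module.End.mul_apply, ← pow_succ, pow_succ', Module.End.mul_apply, hx, map_zero]
  have hKA : ∀ x ∈ ker (e1 ^ d), A x ∈ ker (e1 ^ d) := by
    intro x hx
    rw [mem_ker] at hx ⊢
    rw [hcomm, hx, map_zero, smul_zero]
  have hKem : ∀ x ∈ ker (e1 ^ d), em x ∈ ker (e1 ^ d) := by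
    intro x hx
    rw [← hker (d + 1) (Nat.le_succ d), mem_ker]
    have : (e1 ^ (d + 1)) (em x) = (e1 ^ d) ((e1 * em) x) := by
      rw [pow_succ, Module.End.mul_apply, Module.End.mul_apply]
    rw [this, h2]
    have hA : (e1 ^ d) (A x) = 0 := hKA x hx
    have hA2 : (e1 ^ d) (A (A x)) = 0 := hKA _ (hKA x hx)
    simp [pow_two, Module.End.mul_apply, hA, hA2]
  refine ⟨hPe1, hPA, hPem, hKe1, hKA, hKem, ?_, ?_, ?_, ?_⟩
  · rintro x ⟨y, rfl⟩ hx
    have : y ∈ ker (e1 ^ (d + 1)) := by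
      rw [mem_ker, pow_succ', Module.End.mul_apply, hx]
    rw [hker (d + 1) (Nat.le_succ d), mem_ker] at this
    exact this
  · intro y hy
    rw [← hrange] at hy
    obtain ⟨z, rfl⟩ := hy
    exact ⟨(e1 ^ d) z, ⟨z, rfl⟩, by rw [pow_succ', Module.End.mul_apply]⟩
  · rw [Submodule.disjoint_def]
    rintro x ⟨y, rfl⟩ hx
    rw [mem_ker, ← Module.End.mul_apply, ← pow_add] at hx
    have : y ∈ ker (e1 ^ d) := by rw [← hker (d + d) (Nat.le_add_right d d), mem_ker]; exact hx
    rw [mem_ker] at this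
    exact this
  · have hsum := finrank_range_add_finrank_ker (e1 ^ d)
    have hdisj : Disjoint (range (e1 ^ d)) (ker (e1 ^ d)) := by
      rw [Submodule.disjoint_def]
      rintro x ⟨y, rfl⟩ hx
      rw [mem_ker, ← Module.End.mul_apply, ← pow_add] at hx
      have : y ∈ ker (e1 ^ d) := by
        rw [← hker (d + d) (Nat.le_add_right d d), mem_ker]; exact hx
      rw [mem_ker] at this
      exact this
    have hsupinf := Submodule.finrank_sup_add_finrank_inf_eq (range (e1 ^ d)) (ker (e1 ^ d))
    rw [disjoint_iff.mp hdisj, finrank_bot] at hsupinf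
    exact Submodule.eq_top_of_finrank_eq (by omega)

/-- The determinant trick: a submodule on which `e1` acts injectively, `A` acts, the relation
`e1 A = q² A e1` holds and `A` is injective must be trivial when `q` is not a root of unity. -/
lemma podles_W (q : ℂ) (hq : q ≠ 0) (hq' : ∀ k : ℕ, 0 < k → q ^ k ≠ 1)
    (em e1 A : Module.End ℂ V)
    (h1 : em * e1 = A - A ^ 2)
    (h3 : e1 * A = q ^ 2 • (A * e1))
    (S : Submodule ℂ V)
    (hSe : ∀ x ∈ S, e1 x ∈ S) (hSA : ∀ x ∈ S, A x ∈ S)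
    (hSe1inj : ∀ x ∈ S, e1 x = 0 → x = 0)
    (hSeminj : ∀ x ∈ S, em x = 0 → x = 0) : S = ⊥ := by
  by_contra hS
  have : Nontrivial S := Submodule.nontrivial_iff_ne_bot.mpr hS
  have hw0 : 0 < finrank ℂ S := finrank_pos
  set E := e1.restrict hSe with hE
  set B := A.restrict hSA with hB
  have hEinj : Function.Injective E := by
    rw [← LinearMap.ker_eq_bot, Submodule.eq_bot_iff]
    intro x hx
    rw [mem_ker] at hx
    have : e1 (x : V) = 0 := by
      have := congrArg (Subtype.val) hx
      simpa [hE, LinearMap.restrict_apply] using this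
    exact Subtype.ext (hSe1inj _ x.2 this)
  have hBinj : Function.Injective B := by
    rw [← LinearMap.ker_eq_bot, Submodule.eq_bot_iff]
    intro x hx
    rw [mem_ker] at hx
    have hAx : A (x : V) = 0 := by
      have := congrArg (Subtype.val) hx
      simpa [hB, LinearMap.restrict_apply] using this
    have heme1 : em (e1 (x : V)) = 0 := by
      rw [← Module.End.mul_apply, h1]
      simp [pow_two, Module.End.mul_apply, hAx]
    have he1 : e1 (x : V) = 0 := hSeminj _ (hSe _ x.2) heme1
    exact Subtype.ext (hSe1inj _ x.2 he1)
  have hBE : B * E = (q ^ 2)⁻¹ • (E * B) := by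
    ext x
    have hx : e1 (A (x : V)) = q ^ 2 • A (e1 (x : V)) := by
      have := congrArg (fun f : Module.End ℂ V => f (x : V)) h3
      simpa [Module.End.mul_apply] using this
    have : A (e1 (x : V)) = (q ^ 2)⁻¹ • e1 (A (x : V)) := by
      rw [hx, inv_smul_smul₀ (pow_ne_zero _ hq)]
    simpa [hE, hB, Module.End.mul_apply, LinearMap.restrict_apply] using this
  have hdet := congrArg LinearMap.det hBE
  rw [map_mul, LinearMap.det_smul, map_mul] at hdet
  have hdetE : LinearMap.det E ≠ 0 := by
    have : IsUnit E := (Module.End.isUnit_iff E).mpr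
      ⟨hEinj, (LinearMap.injective_iff_surjective).mp hEinj⟩
    exact (this.map LinearMap.det).ne_zero
  have hdetB : LinearMap.det B ≠ 0 := by
    have : IsUnit B := (Module.End.isUnit_iff B).mpr
      ⟨hBinj, (LinearMap.injective_iff_surjective).mp hBinj⟩
    exact (this.map LinearMap.det).ne_zero
  have hone : ((q ^ 2)⁻¹) ^ finrank ℂ S = 1 := by
    have hc : LinearMap.det E * LinearMap.det B ≠ 0 := mul_ne_zero hdetE hdetB
    have : ((q ^ 2)⁻¹) ^ finrank ℂ S * (LinearMap.det E * LinearMap.det B) =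
        1 * (LinearMap.det E * LinearMap.det B) := by
      rw [one_mul, ← hdet]; ring
    exact mul_right_cancel₀ hc this
  have : q ^ (2 * finrank ℂ S) = 1 := by
    have : (q ^ (2 * finrank ℂ S))⁻¹ = 1 := by
      rw [pow_mul, ← inv_pow]; exact hone
    rwa [inv_eq_one] at this
  exact hq' (2 * finrank ℂ S) (by omega) this

end Aux

/-- Any finite-dimensional Podleś representation with parameter `c = 0` decomposes as a direct
sum `V = V₊ ⊕ V₀₀ ⊕ V₋` of subspaces invariant under `e₋₁, e₁, A` such that `e₁` is bijective
and `e₋₁` nilpotent on `V₊`, both `e₁` and `e₋₁` are nilpotent on `V₀₀`, and `e₋₁` is bijective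
and `e₁` nilpotent on `V₋`. -/
theorem stmt9 {V : Type*} [AddCommGroup V] [Module ℂ V] [FiniteDimensional ℂ V]
    (q : ℂ) (hq : q ≠ 0) (hq' : ∀ k : ℕ, 0 < k → q ^ k ≠ 1)
    (em e1 A : Module.End ℂ V) (hrep : PodlesRep q 0 em e1 A) :
    ∃ Vp V00 Vm : Submodule ℂ V,
      iSupIndep ![Vp, V00, Vm] ∧ Vp ⊔ V00 ⊔ Vm = ⊤ ∧
      (∀ x ∈ Vp, em x ∈ Vp) ∧ (∀ x ∈ Vp, e1 x ∈ Vp) ∧ (∀ x ∈ Vp, A x ∈ Vp) ∧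
      (∀ x ∈ V00, em x ∈ V00) ∧ (∀ x ∈ V00, e1 x ∈ V00) ∧ (∀ x ∈ V00, A x ∈ V00) ∧
      (∀ x ∈ Vm, em x ∈ Vm) ∧ (∀ x ∈ Vm, e1 x ∈ Vm) ∧ (∀ x ∈ Vm, A x ∈ Vm) ∧
      (∀ x ∈ Vp, e1 x = 0 → x = 0) ∧ (∀ y ∈ Vp, ∃ x ∈ Vp, e1 x = y) ∧
      (∃ k : ℕ, ∀ x ∈ Vp, (em ^ k) x = 0) ∧
      (∃ k : ℕ, ∀ x ∈ V00, (e1 ^ k) x = 0) ∧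
      (∃ k : ℕ, ∀ x ∈ V00, (em ^ k) x = 0) ∧
      (∀ x ∈ Vm, em x = 0 → x = 0) ∧ (∀ y ∈ Vm, ∃ x ∈ Vm, em x = y) ∧
      (∃ k : ℕ, ∀ x ∈ Vm, (e1 ^ k) x = 0) := by
  obtain ⟨h1, h2, h3, h4⟩ := hrep
  rw [zero_smul, add_zero] at h1 h2
  -- swapped data
  have hqi : (q : ℂ)⁻¹ ≠ 0 := inv_ne_zero hq
  have hq2 : (q : ℂ) ^ 2 ≠ 0 := pow_ne_zero _ hq
  have h1' : e1 * em = q ^ 2 • A - (q ^ 2 • A) ^ 2 := by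
    rw [h2, smul_pow]
    congr 1
    congr 1
    ring
  have h2' : em * e1 = (q⁻¹) ^ 2 • (q ^ 2 • A) - (q⁻¹) ^ 4 • (q ^ 2 • A) ^ 2 := by
    rw [h1, smul_pow, smul_smul, smul_smul]
    have c1 : (q⁻¹) ^ 2 * q ^ 2 = 1 := by field_simp
    have c2 : (q⁻¹) ^ 4 * (q ^ 2) ^ 2 = 1 := by field_simp
    rw [c1, c2, one_smul, one_smul]
  have h3' : em * (q ^ 2 • A) = (q⁻¹) ^ 2 • ((q ^ 2 • A) * em) := by
    rw [mul_smul_comm, h4, smul_smul, smul_mul_assoc, smul_smul]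
    congr 1
    field_simp
  set d := finrank ℂ V with hd
  obtain ⟨hPe1, hPA, hPem, hKe1, hKA, hKem, hPinj, hPsurj, hPKdisj, hPKsup⟩ :=
    podles_side q hq em e1 A h1 h2 h3
  obtain ⟨hMem, hMA', hMe1, hKmem, hKmA', hKme1, hMinj, hMsurj, hMKdisj, hMKsup⟩ :=
    podles_side q⁻¹ hqi e1 em (q ^ 2 • A) h1' h2' h3'
  set Vp := range (e1 ^ d) with hVp
  set K := ker (e1 ^ d) with hK
  set Vm := range (em ^ d) with hVm
  set Km := ker (em ^ d) with hKm
  set V00 := K ⊓ Km with hV00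
  have hMA : ∀ x ∈ Vm, A x ∈ Vm := by
    intro x hx
    have h5 := hMA' x hx
    have h6 : A x = (q ^ 2)⁻¹ • ((q ^ 2 • A) x) := by
      rw [LinearMap.smul_apply, inv_smul_smul₀ hq2]
    rw [h6]
    exact Submodule.smul_mem _ _ h5
  have hKmA : ∀ x ∈ Km, A x ∈ Km := by
    intro x hx
    have h5 := hKmA' x hx
    have h6 : A x = (q ^ 2)⁻¹ • ((q ^ 2 • A) x) := by
      rw [LinearMap.smul_apply, inv_smul_smul₀ hq2]
    rw [h6]
    exact Submodule.smul_mem _ _ h5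
  -- the crucial intersection triviality
  have hW : Vp ⊓ Vm = ⊥ := by
    apply podles_W q hq hq' em e1 A h1 h3
    · exact fun x hx => ⟨hPe1 x hx.1, hMe1 x hx.2⟩
    · exact fun x hx => ⟨hPA x hx.1, hMA x hx.2⟩
    · exact fun x hx => hPinj x hx.1
    · exact fun x hx => hMinj x hx.2
  -- iterated invariance
  have hPemIter : ∀ k : ℕ, ∀ x ∈ Vp, (em ^ k) x ∈ Vp := by
    intro k
    induction k with
    | zero => intro x hx; simpa using hx
    | succ k ih =>
      intro x hx
      rw [pow_succ, Module.End.mul_apply]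
      exact ih _ (hPem x hx)
  have hMe1Iter : ∀ k : ℕ, ∀ x ∈ Vm, (e1 ^ k) x ∈ Vm := by
    intro k
    induction k with
    | zero => intro x hx; simpa using hx
    | succ k ih =>
      intro x hx
      rw [pow_succ, Module.End.mul_apply]
      exact ih _ (hMe1 x hx)
  have hPem0 : ∀ x ∈ Vp, (em ^ d) x = 0 := by
    intro x hx
    have : (em ^ d) x ∈ Vp ⊓ Vm := ⟨hPemIter d x hx, ⟨x, rfl⟩⟩
    rw [hW] at this
    simpa using this
  have hMe10 : ∀ x ∈ Vm, (e1 ^ d) x = 0 := by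
    intro x hx
    have : (e1 ^ d) x ∈ Vp ⊓ Vm := ⟨⟨x, rfl⟩, hMe1Iter d x hx⟩
    rw [hW] at this
    simpa using this
  have hPKm : Vp ≤ Km := fun x hx => mem_ker.mpr (hPem0 x hx)
  have hMK : Vm ≤ K := fun x hx => mem_ker.mpr (hMe10 x hx)
  have hsupK : V00 ⊔ Vm = K := by
    have h5 : (Vm ⊔ Km) ⊓ K = Vm ⊔ Km ⊓ K := sup_inf_assoc_of_le _ hMK
    rw [hMKsup, top_inf_eq] at h5
    rw [hV00, inf_comm, sup_comm]
    exact h5.symm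
  refine ⟨Vp, V00, Vm, ?_, ?_, hPem, hPe1, hPA, ?_, ?_, ?_, hMem, hMe1, hMA, hPinj, hPsurj,
    ⟨d, hPem0⟩, ⟨d, fun x hx => hx.1⟩, ⟨d, fun x hx => hx.2⟩, hMinj, hMsurj, ⟨d, hMe10⟩⟩
  · -- independence
    intro i
    fin_cases i
    · have hle : (⨆ j, ⨆ (_ : j ≠ (0 : Fin 3)), ![Vp, V00, Vm] j) ≤ V00 ⊔ Vm := by
        apply iSup_le; intro j; apply iSup_le; intro hj
        fin_cases j
        · exact absurd rfl hj
        · exact le_sup_left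
        · exact le_sup_right
      have : Disjoint Vp K := hPKdisj
      simpa using this.mono_right (hle.trans (le_of_eq hsupK))
    · have hle : (⨆ j, ⨆ (_ : j ≠ (1 : Fin 3)), ![Vp, V00, Vm] j) ≤ Vp ⊔ Vm := by
        apply iSup_le; intro j; apply iSup_le; intro hj
        fin_cases j
        · exact le_sup_left
        · exact absurd rfl hj
        · exact le_sup_right
      have hdisj : Disjoint V00 (Vp ⊔ Vm) := by
        rw [Submodule.disjoint_def]
        intro x hx hx'
        obtain ⟨p, hp, m, hm, rfl⟩ := Submodule.mem_sup.mp hx'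
        have hmem : (em ^ d) (p + m) = 0 := mem_ker.mp hx.2
        have hpm : (em ^ d) p = 0 := hPem0 p hp
        have hmm : (em ^ d) m = 0 := by
          have := hmem
          rw [map_add, hpm, zero_add] at this
          exact this
        have hm0 : m = 0 := by
          have : m ∈ Vm ⊓ Km := ⟨hm, mem_ker.mpr hmm⟩
          have h6 := Submodule.disjoint_def.mp hMKdisj m this.1 this.2
          exact h6
        rw [hm0, add_zero] at hx ⊢
        exact Submodule.disjoint_def.mp hPKdisj p hp hx.1
      simpa using hdisj.mono_right hle
    · have hle : (⨆ j, ⨆ (_ : j ≠ (2 : Fin 3)), ![Vp, V00, Vm] j) ≤ Vp ⊔ V00 := by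
        apply iSup_le; intro j; apply iSup_le; intro hj
        fin_cases j
        · exact le_sup_left
        · exact le_sup_right
        · exact absurd rfl hj
      have hdisj : Disjoint Vm Km := hMKdisj
      have h6 : Vp ⊔ V00 ≤ Km := sup_le hPKm (by rw [hV00]; exact inf_le_right)
      simpa using hdisj.mono_right (hle.trans h6)
  · rw [sup_assoc, hsupK]
    exact hPKsup
  · exact fun x hx => ⟨hKem x hx.1, hKmem x hx.2⟩
  · exact fun x hx => ⟨hKe1 x hx.1, hKme1 x hx.2⟩
  · exact fun x hx => ⟨hKA x hx.1, hKmA x hx.2⟩
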